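/- Let $k \geq 2$, let $m_1, \ldots, m_k$ be positive integers with $n = \sum_{i=1}^{k} m_i$, and let $f : \{1, \ldots, n\} \to \{1, \ldots, k\}$ be the 'block label' function, i.e., $f(j) = i$ if $\sum_{l < i} m_l < j \leq \sum_{l \leq i} m_l$. Define $x_j = -f(j)/k \in \mathbb{Q}$ for each $j$. Then the number of ordered pairs $(i,j)$ with $1 \leq i, j \leq n$, $i \neq j$, and $x_i - x_j - \frac{1}{k} \in \mathbb{Z}$, equals $\sum_{i=1}^{k-1} m_i m_{i+1} + m_k m_1$. -/

import Mathlib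

open scoped Classical

theorem stmt15 (k n : ℕ) (hk : 2 ≤ k) (m : ℕ → ℕ)
    (hm : ∀ i ∈ Finset.Icc 1 k, 1 ≤ m i)
    (hn : n = ∑ i ∈ Finset.Icc 1 k, m i) (f : ℕ → ℕ)
    (hf : ∀ i ∈ Finset.Icc 1 k, ∀ j : ℕ,
      (∑ l ∈ Finset.Icc 1 (i - 1), m l) < j → j ≤ (∑ l ∈ Finset.Icc 1 i, m l) →
        f j = i) :
    (((Finset.Icc 1 n) ×ˢ (Finset.Icc 1 n)).filter
      (fun p : ℕ × ℕ => p.1 ≠ p.2 ∧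
        ∃ z : ℤ, (-(f p.1 : ℚ) / k) - (-(f p.2 : ℚ) / k) - 1 / k = (z : ℚ))).card
    = (∑ i ∈ Finset.Icc 1 (k - 1), m i * m (i + 1)) + m k * m 1 := by
  have hk0 : (k : ℚ) ≠ 0 := by positivity
  set P : ℕ → ℕ := fun i => ∑ l ∈ Finset.Icc 1 i, m l with hP
  have hP0 : P 0 = 0 := by simp [hP]
  have hPmono : Monotone P := by
    intro a b hab
    exact Finset.sum_le_sum_of_subset (Finset.Icc_subset_Icc le_rfl hab)
  have hPstep : ∀ i, 1 ≤ i → P i = P (i - 1) + m i := by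
    intro i hi
    have h1 : i - 1 + 1 = i := by omega
    have := Finset.sum_Icc_succ_top (a := 1) (b := i - 1) (by omega) m
    rw [h1] at this
    simpa [hP] using this
  set B : ℕ → Finset ℕ := fun i => Finset.Ioc (P (i - 1)) (P i) with hB
  have hcard : ∀ i ∈ Finset.Icc 1 k, (B i).card = m i := by
    intro i hi
    simp only [hB, Nat.card_Ioc]
    rw [hPstep i (Finset.mem_Icc.mp hi).1]
    omega
  have hsub : ∀ i ∈ Finset.Icc 1 k, B i ⊆ Finset.Icc 1 n := by
    intro i hi j hj
    rw [Finset.mem_Icc] at hi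
    simp only [hB, Finset.mem_Ioc] at hj
    have h1 : P 0 ≤ P (i - 1) := hPmono (by omega)
    have h2 : P i ≤ P k := hPmono hi.2
    rw [Finset.mem_Icc]
    constructor
    · omega
    · rw [hn]; exact le_trans hj.2 h2
  have hfB : ∀ i ∈ Finset.Icc 1 k, ∀ j ∈ B i, f j = i := by
    intro i hi j hj
    simp only [hB, Finset.mem_Ioc] at hj
    exact hf i hi j hj.1 hj.2
  have hcover : ∀ j ∈ Finset.Icc 1 n, ∃ i ∈ Finset.Icc 1 k, j ∈ B i := by
    intro j hj
    rw [Finset.mem_Icc] at hj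
    have hjk : j ≤ P k := by rw [hn] at hj; exact hj.2
    have hex : ∃ i, j ≤ P i := ⟨k, hjk⟩
    classical
    set i := Nat.find hex with hi
    have hile : j ≤ P i := Nat.find_spec hex
    have hik : i ≤ k := Nat.find_le hjk
    have hi1 : 1 ≤ i := by
      by_contra h
      have : i = 0 := by omega
      rw [this, hP0] at hile; omega
    have hlt : P (i - 1) < j := by
      have := Nat.find_min hex (m := i - 1) (by omega)
      omega
    exact ⟨i, Finset.mem_Icc.mpr ⟨hi1, hik⟩, by simp [hB, Finset.mem_Ioc]; exact ⟨hlt, hile⟩⟩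
  have hdisj : ∀ i ∈ Finset.Icc 1 k, ∀ i' ∈ Finset.Icc 1 k, i ≠ i' →
      Disjoint (B i) (B i') := by
    intro i _ i' _ hne
    rw [Finset.disjoint_left]
    intro a ha ha'
    simp only [hB, Finset.mem_Ioc] at ha ha'
    rcases lt_or_gt_of_ne hne with h | h
    · have : P i ≤ P (i' - 1) := hPmono (by omega)
      omega
    · have : P i' ≤ P (i - 1) := hPmono (by omega)
      omega
  set g : ℕ → ℕ := fun i => if i = k then 1 else i + 1 with hg
  have hgmem : ∀ i ∈ Finset.Icc 1 k, g i ∈ Finset.Icc 1 k := by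
    intro i hi
    rw [Finset.mem_Icc] at hi ⊢
    simp only [hg]
    split <;> omega
  have hgne : ∀ i ∈ Finset.Icc 1 k, g i ≠ i := by
    intro i hi
    rw [Finset.mem_Icc] at hi
    simp only [hg]
    split <;> omega
  have hset : (((Finset.Icc 1 n) ×ˢ (Finset.Icc 1 n)).filter
      (fun p : ℕ × ℕ => p.1 ≠ p.2 ∧
        ∃ z : ℤ, (-(f p.1 : ℚ) / k) - (-(f p.2 : ℚ) / k) - 1 / k = (z : ℚ)))
      = (Finset.Icc 1 k).biUnion (fun i => B i ×ˢ B (g i)) := by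
    ext p
    simp only [Finset.mem_filter, Finset.mem_product, Finset.mem_biUnion]
    constructor
    · rintro ⟨⟨h1, h2⟩, _, z, hz⟩
      obtain ⟨i, hi, hBi⟩ := hcover p.1 h1
      obtain ⟨i', hi', hBi'⟩ := hcover p.2 h2
      have hf1 : f p.1 = i := hfB i hi p.1 hBi
      have hf2 : f p.2 = i' := hfB i' hi' p.2 hBi'
      rw [hf1, hf2] at hz
      have hzq : ((i' : ℚ) - i - 1) / k = z := by rw [← hz]; ring
      rw [div_eq_iff hk0] at hzq
      have hzint : ((i' : ℤ) - i - 1) = z * k := by exact_mod_cast hzq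
      rw [Finset.mem_Icc] at hi hi'
      have hkz : (0 : ℤ) < k := by exact_mod_cast (by omega : 0 < k)
      have h1 : z * k ≤ (k : ℤ) - 2 := by omega
      have h2 : -(k : ℤ) ≤ z * k := by omega
      have hzb : z = 0 ∨ z = -1 := by
        rcases le_or_gt 0 z with h | h
        · left
          by_contra hne
          have h3 : 1 ≤ z := by omega
          have := mul_le_mul_of_nonneg_right h3 (le_of_lt hkz)
          linarith
        · right
          by_contra hne
          have h3 : z ≤ -2 := by omega
          have := mul_le_mul_of_nonneg_right h3 (le_of_lt hkz)
          linarith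
      rcases hzb with rfl | rfl
      · have hii' : i' = i + 1 := by omega
        have hik : i ≠ k := by omega
        refine ⟨i, Finset.mem_Icc.mpr ⟨hi.1, hi.2⟩, hBi, ?_⟩
        have : g i = i' := by simp [hg, hik, hii']
        rw [this]; exact hBi'
      · have hik : i = k ∧ i' = 1 := by omega
        refine ⟨i, Finset.mem_Icc.mpr ⟨hi.1, hi.2⟩, hBi, ?_⟩
        have : g i = i' := by simp [hg, hik.1, hik.2]
        rw [this]; exact hBi'
    · rintro ⟨i, hi, hp⟩
      have hgi := hgmem i hi
      have hf1 : f p.1 = i := hfB i hi p.1 hp.1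
      have hf2 : f p.2 = g i := hfB (g i) hgi p.2 hp.2
      refine ⟨⟨hsub i hi hp.1, hsub (g i) hgi hp.2⟩, ?_, ?_⟩
      · intro h
        apply hgne i hi
        rw [← hf2, ← h, hf1]
      · rw [hf1, hf2]
        by_cases hik : i = k
        · refine ⟨-1, ?_⟩
          simp only [hg, hik, if_pos rfl]
          push_cast
          field_simp
          ring
        · refine ⟨0, ?_⟩
          simp only [hg, if_neg hik]
          push_cast
          field_simp
          ring
  rw [hset]
  rw [Finset.card_biUnion]
  · have hsum : ∀ i ∈ Finset.Icc 1 k, (B i ×ˢ B (g i)).card = m i * m (g i) := by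
      intro i hi
      rw [Finset.card_product, hcard i hi, hcard (g i) (hgmem i hi)]
    rw [Finset.sum_congr rfl hsum]
    have hk1 : k - 1 + 1 = k := by omega
    have := Finset.sum_Icc_succ_top (a := 1) (b := k - 1) (by omega)
      (fun i => m i * m (g i))
    rw [hk1] at this
    rw [this]
    congr 1
    · apply Finset.sum_congr rfl
      intro i hi
      rw [Finset.mem_Icc] at hi
      have : g i = i + 1 := by simp [hg]; omega
      rw [this]
    · have : g k = 1 := by simp [hg]
      rw [this]
  · intro i hi i' hi' hne
    rw [Function.onFun, Finset.disjoint_left]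
    intro p hp hp'
    rw [Finset.mem_product] at hp hp'
    exact (Finset.disjoint_left.mp (hdisj i hi i' hi' hne)) hp.1 hp'.1
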